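/- One has lim_{τ→0⁺} exp( φ(q₂(τ),τ) − πi·(1/τ − 1/8) ) = 1; equivalently, e^{φ(q₂(τ),τ)} = exp(πi(1/τ − 1/8))·E(τ) with E(τ) → 1 as τ → 0⁺. -/

import Mathlib

open Real Complex Filter

noncomputable def Ppoly (τ : ℝ) (z : ℂ) : ℂ :=
  z ^ 3 + (Complex.I - 1 / (4 * (π : ℂ)) - Complex.I / (τ : ℂ) ^ 2) * z ^ 2
    - z / 4 - Complex.I / 4

noncomputable def phi (τ : ℝ) (z : ℂ) : ℂ :=
  -(π : ℂ) * z - (π : ℂ) / (4 * z) +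
    ((1 / 2 + 2 * (π : ℂ) * Complex.I / (τ : ℂ) ^ 2) / 2) *
      Complex.log (1 - Complex.I * z)

set_option maxHeartbeats 4000000

lemma logTaylor_three (x : ℂ) : Complex.logTaylor 3 x = x - x^2/2 := by
  simp [Complex.logTaylor, Finset.sum_range_succ]
  ring

lemma key_est (τ : ℝ) (hτ0 : 0 < τ) (hτ4 : τ ≤ 1/4) (z : ℂ)
    (h1 : ‖z - Complex.I * (τ:ℂ) / 2‖ < τ / 10) (hP : Ppoly τ z = 0) :
    ‖phi τ z - (π:ℂ) * Complex.I * (1/(τ:ℂ) - 1/8)‖ ≤ 13 * τ := by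
  have hτC : (τ:ℂ) ≠ 0 := Complex.ofReal_ne_zero.mpr hτ0.ne'
  have hπ : (π:ℂ) ≠ 0 := Complex.ofReal_ne_zero.mpr Real.pi_ne_zero
  have hππ : (π:ℂ) * (π:ℂ)⁻¹ = 1 := mul_inv_cancel₀ hπ
  have hτi : (τ:ℂ) * (τ:ℂ)⁻¹ = 1 := mul_inv_cancel₀ hτC
  have hτn : ‖(τ:ℂ)‖ = τ := by
    rw [Complex.norm_real, Real.norm_eq_abs, abs_of_pos hτ0]
  have hπ3 : (3:ℝ) < π := Real.pi_gt_three
  have hπ315 : π < 3.15 := by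
    have := Real.pi_lt_d2
    linarith
  have hπn : ‖(π:ℂ)‖ = π := by
    rw [Complex.norm_real, Real.norm_eq_abs, abs_of_pos Real.pi_pos]
  set a : ℂ := Complex.I * (τ:ℂ) / 2 with ha
  have na : ‖a‖ = τ / 2 := by
    rw [ha, norm_div, norm_mul, Complex.norm_I, hτn]
    norm_num
  have n1 : ‖z‖ ≤ 3 * τ / 5 := by
    have h := norm_add_le (z - a) a
    rw [sub_add_cancel] at h
    rw [na] at h
    linarith
  have n2 : 2 * τ / 5 ≤ ‖z‖ := by
    have h := norm_sub_norm_le a z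
    rw [norm_sub_rev, na] at h
    linarith
  have hz0 : z ≠ 0 := by
    intro h
    rw [h, norm_zero] at n2
    linarith
  have hzi : z * z⁻¹ = 1 := mul_inv_cancel₀ hz0
  have n3 : 9 * τ / 10 ≤ ‖z + a‖ := by
    have h := norm_sub_norm_le (a + a) (z + a)
    have e1 : a + a - (z + a) = a - z := by ring
    have e2 : ‖a + a‖ = τ := by
      rw [show a + a = Complex.I * (τ:ℂ) by rw [ha]; ring, norm_mul, Complex.norm_I, hτn]
      norm_num
    rw [e1, e2, norm_sub_rev] at h
    linarith
  -- identity 1 from the polynomial equation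
  have h_id1 : z^2 + (τ:ℂ)^2/4
      = (τ:ℂ)^2 * (Complex.I*z/4 + (1+Complex.I/(4*(π:ℂ)))*z^2 - Complex.I*z^3) := by
    rw [Ppoly] at hP
    field_simp [hτC, hπ] at hP
    have t' : 64*(π:ℂ)*(z^2 + (τ:ℂ)^2/4)
        = 64*(π:ℂ)*((τ:ℂ)^2 * (Complex.I*z/4 + (1+Complex.I/(4*(π:ℂ)))*z^2 - Complex.I*z^3)) := by
      linear_combination 16 * Complex.I * hP + (64*(π:ℂ)*(1-(τ:ℂ)^2)*z^2 + 16*(π:ℂ)*(τ:ℂ)^2) * Complex.I_sq - (16*z^2*(τ:ℂ)^2*Complex.I) * hππ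
    exact mul_left_cancel₀ (mul_ne_zero (by norm_num) hπ) t'
  have hcoef : ‖(1:ℂ)+Complex.I/(4*(π:ℂ))‖ ≤ 13/12 := by
    have h := norm_add_le (1:ℂ) (Complex.I/(4*(π:ℂ)))
    have e1 : ‖Complex.I/(4*(π:ℂ))‖ = 1/(4*π) := by
      rw [norm_div, Complex.norm_I, norm_mul, Complex.norm_real, Real.norm_eq_abs,
        abs_of_pos Real.pi_pos]
      norm_num
    rw [e1, norm_one] at h
    have : 1/(4*π) ≤ 1/12 := by
      rw [div_le_div_iff₀ (by linarith) (by norm_num)]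
      linarith
    linarith
  have nX : ‖Complex.I*z/4 + (1+Complex.I/(4*(π:ℂ)))*z^2 - Complex.I*z^3‖ ≤ 27/100 * τ := by
    have t1 : ‖Complex.I*z/4 + (1+Complex.I/(4*(π:ℂ)))*z^2 - Complex.I*z^3‖
        ≤ ‖Complex.I*z/4‖ + ‖(1+Complex.I/(4*(π:ℂ)))*z^2‖ + ‖Complex.I*z^3‖ := by
      refine le_trans (norm_sub_le _ _) ?_
      have := norm_add_le (Complex.I*z/4) ((1+Complex.I/(4*(π:ℂ)))*z^2)
      linarith
    have e1 : ‖Complex.I*z/4‖ = ‖z‖/4 := by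
      rw [norm_div, norm_mul, Complex.norm_I]; norm_num
    have e2 : ‖(1+Complex.I/(4*(π:ℂ)))*z^2‖ ≤ 13/12 * ‖z‖^2 := by
      rw [norm_mul, norm_pow]
      exact mul_le_mul_of_nonneg_right hcoef (by positivity)
    have e3 : ‖Complex.I*z^3‖ = ‖z‖^3 := by
      rw [norm_mul, Complex.norm_I, norm_pow]; norm_num
    rw [e1, e3] at t1
    have hz2 : ‖z‖^2 ≤ (3*τ/5)^2 := by nlinarith [norm_nonneg z]
    have hz3 : ‖z‖^3 ≤ (3*τ/5)^3 := by nlinarith [norm_nonneg z]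
    nlinarith
  have hfac : z^2 + (τ:ℂ)^2/4 = (z - a)*(z + a) := by
    rw [ha]
    linear_combination ((τ:ℂ)^2/4) * Complex.I_sq
  have n4 : ‖z - a‖ ≤ 3/10 * τ^2 := by
    have h := congrArg norm hfac
    rw [norm_mul] at h
    have hb1 : ‖z^2 + (τ:ℂ)^2/4‖ ≤ 27/100 * τ^3 := by
      rw [h_id1, norm_mul, norm_pow, hτn]
      nlinarith [nX, sq_nonneg τ]
    rw [h] at hb1
    nlinarith [norm_nonneg (z - a), norm_nonneg (z + a)]
  -- second order approximation
  set b : ℂ := Complex.I * (τ:ℂ) / 2 + Complex.I * (τ:ℂ)^2 / 8 with hb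
  have nb : ‖b‖ = τ/2 + τ^2/8 := by
    have e : b = Complex.I * ((τ/2 + τ^2/8 : ℝ):ℂ) := by rw [hb]; push_cast; ring
    rw [e, norm_mul, Complex.norm_I, one_mul, Complex.norm_real, Real.norm_eq_abs,
      abs_of_pos (by positivity)]
  have hb0 : b ≠ 0 := by
    intro h
    rw [h, norm_zero] at nb
    nlinarith
  have hbi : b * b⁻¹ = 1 := mul_inv_cancel₀ hb0
  have nzb : 139 * τ / 160 ≤ ‖z + b‖ := by
    have h := norm_sub_norm_le (z + a) (z + b)
    have e1 : z + a - (z + b) = -(Complex.I * (τ:ℂ)^2/8) := by rw [ha, hb]; ring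
    have e2 : ‖z + a - (z + b)‖ = τ^2/8 := by
      rw [e1, norm_neg, norm_div, norm_mul, Complex.norm_I, norm_pow, hτn]
      norm_num
    rw [e2] at h
    nlinarith
  have h_id2 : z^2 - b^2 = (τ:ℂ)^4/64 + Complex.I*(τ:ℂ)^2*(z-a)/4
      + (τ:ℂ)^2*((1+Complex.I/(4*(π:ℂ)))*z^2 - Complex.I*z^3) := by
    rw [ha, hb]
    linear_combination h_id1 - ((τ:ℂ)^2/4 + (τ:ℂ)^4/64) * Complex.I_sq
  have n5 : ‖z^2 - b^2‖ ≤ 54/100 * τ^4 := by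
    have t1 : ‖z^2 - b^2‖ ≤ ‖(τ:ℂ)^4/64‖ + ‖Complex.I*(τ:ℂ)^2*(z-a)/4‖
        + ‖(τ:ℂ)^2*((1+Complex.I/(4*(π:ℂ)))*z^2 - Complex.I*z^3)‖ := by
      rw [h_id2]
      refine le_trans (norm_add_le _ _) ?_
      have := norm_add_le ((τ:ℂ)^4/64) (Complex.I*(τ:ℂ)^2*(z-a)/4)
      linarith
    have e1 : ‖(τ:ℂ)^4/64‖ = τ^4/64 := by
      rw [norm_div, norm_pow, hτn]; norm_num
    have e2 : ‖Complex.I*(τ:ℂ)^2*(z-a)/4‖ = τ^2 * ‖z - a‖ / 4 := by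
      rw [norm_div, norm_mul, norm_mul, Complex.norm_I, norm_pow, hτn]
      norm_num
    have e3 : ‖(τ:ℂ)^2*((1+Complex.I/(4*(π:ℂ)))*z^2 - Complex.I*z^3)‖
        ≤ τ^2 * (13/12 * ‖z‖^2 + ‖z‖^3) := by
      rw [norm_mul, norm_pow, hτn]
      refine mul_le_mul_of_nonneg_left ?_ (by positivity)
      refine le_trans (norm_sub_le _ _) ?_
      have e4 : ‖(1+Complex.I/(4*(π:ℂ)))*z^2‖ ≤ 13/12 * ‖z‖^2 := by
        rw [norm_mul, norm_pow]
        exact mul_le_mul_of_nonneg_right hcoef (by positivity)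
      have e5 : ‖Complex.I*z^3‖ = ‖z‖^3 := by
        rw [norm_mul, Complex.norm_I, norm_pow]; norm_num
      linarith
    rw [e1, e2] at t1
    have hz2 : ‖z‖^2 ≤ 9/25*τ^2 := by nlinarith [norm_nonneg z]
    have hz3 : ‖z‖^3 ≤ 27/125*τ^3 := by nlinarith [norm_nonneg z]
    have c1 : τ^2*‖z-a‖ ≤ 3/10*τ^4 := by
      calc τ^2*‖z-a‖ ≤ τ^2*(3/10*τ^2) := mul_le_mul_of_nonneg_left n4 (sq_nonneg τ)
        _ = 3/10*τ^4 := by ring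
    have c2 : τ^2*‖z‖^2 ≤ 9/25*τ^4 := by
      calc τ^2*‖z‖^2 ≤ τ^2*(9/25*τ^2) := mul_le_mul_of_nonneg_left hz2 (sq_nonneg τ)
        _ = 9/25*τ^4 := by ring
    have c3 : τ^2*‖z‖^3 ≤ 27/500*τ^4 := by
      calc τ^2*‖z‖^3 ≤ τ^2*(27/125*τ^3) := mul_le_mul_of_nonneg_left hz3 (sq_nonneg τ)
        _ = 27/125*(τ*τ^4) := by ring
        _ ≤ 27/125*((1/4)*τ^4) := by
            have h4 : (0:ℝ) ≤ τ^4 := by positivity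
            nlinarith
        _ = 27/500*τ^4 := by ring
    have e3' : ‖(τ:ℂ)^2*((1+Complex.I/(4*(π:ℂ)))*z^2 - Complex.I*z^3)‖
        ≤ 13/12*(τ^2*‖z‖^2) + τ^2*‖z‖^3 := by
      calc ‖(τ:ℂ)^2*((1+Complex.I/(4*(π:ℂ)))*z^2 - Complex.I*z^3)‖
          ≤ τ^2 * (13/12 * ‖z‖^2 + ‖z‖^3) := e3
        _ = 13/12*(τ^2*‖z‖^2) + τ^2*‖z‖^3 := by ring
    have h4 : (0:ℝ) ≤ τ^4 := by positivity
    linarith [t1, e3', c1, c2, c3]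
  have n6 : ‖z - b‖ ≤ 7/10 * τ^3 := by
    have hfac2 : z^2 - b^2 = (z - b)*(z + b) := by ring
    have h := congrArg norm hfac2
    rw [norm_mul] at h
    rw [h] at n5
    nlinarith [norm_nonneg (z - b), norm_nonneg (z + b)]
  -- the logarithm estimate
  have ne0 : ‖Complex.log (1 - Complex.I*z) - (τ:ℂ)/2‖ ≤ 2*τ^3 := by
    set w : ℂ := -(Complex.I * z) with hw
    have nw : ‖w‖ = ‖z‖ := by rw [hw, norm_neg, norm_mul, Complex.norm_I, one_mul]
    have hw320 : ‖w‖ ≤ 3/20 := by rw [nw]; nlinarith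
    have hw1 : ‖w‖ < 1 := by linarith
    have hlog : ‖Complex.log (1 - Complex.I*z) - (w - w^2/2)‖ ≤ 1/10 * τ^3 := by
      have h := Complex.norm_log_sub_logTaylor_le 2 hw1
      rw [logTaylor_three] at h
      have e1 : (1:ℂ) + w = 1 - Complex.I * z := by rw [hw]; ring
      rw [e1] at h
      have hnw3 : ‖w‖^3 ≤ 27/125*τ^3 := by
        rw [nw]
        calc ‖z‖^3 ≤ (3*τ/5)^3 := pow_le_pow_left₀ (norm_nonneg z) n1 3
          _ = 27/125*τ^3 := by ring
      have hinv : (1 - ‖w‖)⁻¹ ≤ 20/17 := by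
        rw [inv_le_comm₀ (by linarith) (by norm_num)]
        linarith
      norm_num at h
      have hmul : ‖w‖^3 * (1-‖w‖)⁻¹ ≤ (27/125*τ^3) * (20/17) :=
        mul_le_mul hnw3 hinv (inv_nonneg.2 (by linarith)) (by positivity)
      have h3nn : (0:ℝ) ≤ τ^3 := by positivity
      linarith
    set w0 : ℂ := (τ:ℂ)/2 + (τ:ℂ)^2/8 with hw0
    have hww0 : w - w0 = -Complex.I * (z - b) := by
      rw [hw, hw0, hb]
      linear_combination (-((τ:ℂ)/2 + (τ:ℂ)^2/8)) * Complex.I_sq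
    have ns : ‖w - w0‖ ≤ 7/10*τ^3 := by
      rw [hww0, norm_mul, norm_neg, Complex.norm_I, one_mul]
      exact n6
    have nw0 : ‖w0‖ ≤ τ/2 + τ^2/8 := by
      rw [hw0]
      refine le_trans (norm_add_le _ _) ?_
      rw [norm_div, norm_div, norm_pow, hτn]
      norm_num
    have nmid : ‖(w - w^2/2) - (w0 - w0^2/2)‖ ≤ (7/10*τ^3)*(23/20) := by
      have mid : (w - w^2/2) - (w0 - w0^2/2) = (w - w0)*(1 - (w + w0)/2) := by ring
      rw [mid, norm_mul]
      have nf : ‖(1:ℂ) - (w + w0)/2‖ ≤ 23/20 := by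
        refine le_trans (norm_sub_le _ _) ?_
        rw [norm_one, norm_div]
        have := norm_add_le w w0
        have hτ2 : τ^2 ≤ τ/4 := by nlinarith
        rw [nw] at this
        have h2 : ‖(2:ℂ)‖ = 2 := by norm_num
        rw [h2]
        nlinarith [norm_nonneg (w + w0)]
      exact mul_le_mul ns nf (norm_nonneg _) (by positivity)
    have ntail : ‖w0 - w0^2/2 - (τ:ℂ)/2‖ ≤ τ^3/16 + τ^4/128 := by
      have tail : w0 - w0^2/2 - (τ:ℂ)/2 = -((τ:ℂ)^3/16) - (τ:ℂ)^4/128 := by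
        rw [hw0]; ring
      rw [tail]
      refine le_trans (norm_sub_le _ _) ?_
      rw [norm_neg, norm_div, norm_div, norm_pow, norm_pow, hτn]
      norm_num
    have decomp : Complex.log (1 - Complex.I*z) - (τ:ℂ)/2
        = (Complex.log (1 - Complex.I*z) - (w - w^2/2))
          + ((w - w^2/2) - (w0 - w0^2/2)) + (w0 - w0^2/2 - (τ:ℂ)/2) := by ring
    rw [decomp]
    have htt : τ^4 ≤ τ^3/4 := by nlinarith [pow_pos hτ0 3]
    have h3nn : (0:ℝ) ≤ τ^3 := by positivity
    refine le_trans (norm_add_le _ _) ?_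
    have := norm_add_le (Complex.log (1 - Complex.I*z) - (w - w^2/2)) ((w - w^2/2) - (w0 - w0^2/2))
    linarith
  -- final assembly
  clear_value a b
  obtain ⟨e, hL, ne'⟩ : ∃ e : ℂ, Complex.log (1 - Complex.I*z) = (τ:ℂ)/2 + e ∧ ‖e‖ ≤ 2*τ^3 :=
    ⟨Complex.log (1 - Complex.I*z) - (τ:ℂ)/2, by ring, ne0⟩
  have h140 : (0:ℝ) < 1 + τ/4 := by linarith
  have h14 : (1:ℂ) + (τ:ℂ)/4 ≠ 0 := by
    have h' : (1:ℂ) + (τ:ℂ)/4 = ((1 + τ/4 : ℝ):ℂ) := by push_cast; ring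
    rw [h']
    exact Complex.ofReal_ne_zero.mpr (by linarith)
  have h14i : ((1:ℂ) + (τ:ℂ)/4) * ((1:ℂ) + (τ:ℂ)/4)⁻¹ = 1 := mul_inv_cancel₀ h14
  have h_split : phi τ z - (π:ℂ) * Complex.I * (1/(τ:ℂ) - 1/8)
      = -(π:ℂ)*z + (-(π:ℂ)/(4*z) + (π:ℂ)/(4*b))
        + (-(π:ℂ)/(4*b) - (π:ℂ)*Complex.I/(2*(τ:ℂ)) + (π:ℂ)*Complex.I/8)
        + ((τ:ℂ)/8 + e/4 + (π:ℂ)*Complex.I*e/(τ:ℂ)^2) := by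
    rw [phi, hL]
    linear_combination ((π:ℂ)*Complex.I*(τ:ℂ)⁻¹/2) * hτi
  have hbinv : b⁻¹ = -Complex.I * 2 * (τ:ℂ)⁻¹ * ((1:ℂ)+(τ:ℂ)/4)⁻¹ := by
    refine inv_eq_of_mul_eq_one_right ?_
    rw [hb]
    linear_combination (-((τ:ℂ)/2+(τ:ℂ)^2/8)*2*(τ:ℂ)⁻¹*((1:ℂ)+(τ:ℂ)/4)⁻¹) * Complex.I_sq
      + ((1+(τ:ℂ)/4)*((1:ℂ)+(τ:ℂ)/4)⁻¹) * hτi + h14i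
  have hbkey : -(π:ℂ)/(4*b) = (π:ℂ)*Complex.I/(2*(τ:ℂ)) * ((1:ℂ)+(τ:ℂ)/4)⁻¹ := by
    have h' : -(π:ℂ)/(4*b) = -(π:ℂ)/4 * b⁻¹ := by ring
    rw [h', hbinv]
    ring
  have hDval : -(π:ℂ)/(4*b) - (π:ℂ)*Complex.I/(2*(τ:ℂ)) + (π:ℂ)*Complex.I/8
      = (π:ℂ)*Complex.I*(τ:ℂ)/32 * ((1:ℂ)+(τ:ℂ)/4)⁻¹ := by
    rw [hbkey]
    linear_combination ((π:ℂ)*Complex.I*((τ:ℂ)⁻¹/2 - 1/8)) * h14i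
      - ((π:ℂ)*Complex.I*(((1:ℂ)+(τ:ℂ)/4)⁻¹)/8) * hτi
  have hAval : -(π:ℂ)/(4*z) + (π:ℂ)/(4*b) = (π:ℂ)*(z - b)/(4*z*b) := by
    linear_combination (-(π:ℂ)*b⁻¹/4) * hzi + ((π:ℂ)*z⁻¹/4) * hbi
  have nA : ‖-(π:ℂ)/(4*z) + (π:ℂ)/(4*b)‖ ≤ 3*τ := by
    rw [hAval, norm_div, norm_mul, hπn]
    have nden : ‖(4:ℂ)*z*b‖ = 4*(‖z‖*‖b‖) := by
      rw [norm_mul, norm_mul]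
      have h4 : ‖(4:ℂ)‖ = 4 := by norm_num
      rw [h4]; ring
    rw [nden, div_le_iff₀ (by nlinarith [nb])]
    have hzb : τ^2/5 ≤ ‖z‖*‖b‖ := by
      rw [nb]
      have h' : (2*τ/5)*(τ/2) ≤ ‖z‖*(τ/2) := mul_le_mul_of_nonneg_right n2 (by positivity)
      have h'' : ‖z‖*(τ/2) ≤ ‖z‖*(τ/2+τ^2/8) := by
        refine mul_le_mul_of_nonneg_left ?_ (norm_nonneg z)
        nlinarith [sq_nonneg τ]
      nlinarith [h', h'']
    calc π*‖z-b‖ ≤ 3.15*(7/10*τ^3) :=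
          mul_le_mul hπ315.le n6 (norm_nonneg _) (by norm_num)
      _ ≤ 3*τ*(4*(τ^2/5)) := by nlinarith [pow_pos hτ0 3]
      _ ≤ 3*τ*(4*(‖z‖*‖b‖)) := by gcongr
  have nD : ‖-(π:ℂ)/(4*b) - (π:ℂ)*Complex.I/(2*(τ:ℂ)) + (π:ℂ)*Complex.I/8‖ ≤ τ/5 := by
    have n14 : ‖(1:ℂ)+(τ:ℂ)/4‖ = 1 + τ/4 := by
      have h' : (1:ℂ) + (τ:ℂ)/4 = ((1 + τ/4 : ℝ):ℂ) := by push_cast; ring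
      rw [h', Complex.norm_real, Real.norm_eq_abs, abs_of_pos h140]
    have hval : ‖-(π:ℂ)/(4*b) - (π:ℂ)*Complex.I/(2*(τ:ℂ)) + (π:ℂ)*Complex.I/8‖
        = π * τ / 32 * (1 + τ/4)⁻¹ := by
      rw [hDval, norm_mul, norm_div, norm_mul, norm_mul, hπn, Complex.norm_I, hτn,
        norm_inv, n14]
      norm_num
    rw [hval]
    have hv : (1 + τ/4)⁻¹ ≤ 1 := by
      rw [inv_le_one_iff₀]; right; linarith
    calc π * τ / 32 * (1 + τ/4)⁻¹ ≤ π * τ / 32 * 1 :=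
          mul_le_mul_of_nonneg_left hv (by positivity)
      _ ≤ τ/5 := by nlinarith
  have nE : ‖(τ:ℂ)/8 + e/4 + (π:ℂ)*Complex.I*e/(τ:ℂ)^2‖ ≤ 7*τ := by
    refine le_trans (norm_add_le _ _) ?_
    have t1 := norm_add_le ((τ:ℂ)/8) (e/4)
    have e1 : ‖(τ:ℂ)/8‖ = τ/8 := by rw [norm_div, hτn]; norm_num
    have e2 : ‖e/4‖ ≤ τ^3/2 := by
      rw [norm_div]
      have h4 : ‖(4:ℂ)‖ = 4 := by norm_num
      rw [h4]; linarith
    have e3 : ‖(π:ℂ)*Complex.I*e/(τ:ℂ)^2‖ ≤ 2*π*τ := by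
      rw [norm_div, norm_mul, norm_mul, hπn, Complex.norm_I, norm_pow, hτn, mul_one]
      rw [div_le_iff₀ (by positivity)]
      nlinarith [Real.pi_pos]
    have hτ3 : τ^3 ≤ τ/16 := by nlinarith [sq_nonneg τ]
    nlinarith [Real.pi_pos]
  have nz : ‖-(π:ℂ)*z‖ ≤ 2*τ := by
    rw [norm_mul, norm_neg, hπn]
    nlinarith
  rw [h_split]
  refine le_trans (norm_add_le _ _) ?_
  have t2 := norm_add_le (-(π:ℂ)*z + (-(π:ℂ)/(4*z) + (π:ℂ)/(4*b)))
    (-(π:ℂ)/(4*b) - (π:ℂ)*Complex.I/(2*(τ:ℂ)) + (π:ℂ)*Complex.I/8)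
  have t3 := norm_add_le (-(π:ℂ)*z) (-(π:ℂ)/(4*z) + (π:ℂ)/(4*b))
  linarith

theorem statement13 (q₂ : ℝ → ℂ)
    (hq₂ : ∀ τ : ℝ, 0 < τ → τ ≤ 1 / 4 →
      ‖q₂ τ - Complex.I * (τ : ℂ) / 2‖ < τ / 10 ∧ Ppoly τ (q₂ τ) = 0) :
    Tendsto
      (fun τ : ℝ => Complex.exp (phi τ (q₂ τ) -
        (π : ℂ) * Complex.I * (1 / (τ : ℂ) - 1 / 8)))
      (nhdsWithin 0 (Set.Ioi 0)) (nhds 1) := by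
  have h0 : Tendsto (fun τ : ℝ => phi τ (q₂ τ) - (π:ℂ) * Complex.I * (1/(τ:ℂ) - 1/8))
      (nhdsWithin 0 (Set.Ioi 0)) (nhds 0) := by
    have hev : ∀ᶠ τ : ℝ in nhdsWithin 0 (Set.Ioi 0),
        ‖phi τ (q₂ τ) - (π:ℂ) * Complex.I * (1/(τ:ℂ) - 1/8)‖ ≤ 13 * τ := by
      filter_upwards [Ioc_mem_nhdsGT_of_mem (show (0:ℝ) ∈ Set.Ico (0:ℝ) (1/4) by constructor <;> norm_num)]
        with τ hτ
      obtain ⟨hq1, hq2'⟩ := hq₂ τ hτ.1 hτ.2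
      exact key_est τ hτ.1 hτ.2 (q₂ τ) (by exact hq1) hq2'
    have hg : Tendsto (fun τ : ℝ => 13 * τ) (nhdsWithin 0 (Set.Ioi 0)) (nhds 0) := by
      have h' : Tendsto (fun τ : ℝ => 13 * τ) (nhds 0) (nhds 0) := by
        simpa using (tendsto_id (α := ℝ) (x := nhds (0:ℝ))).const_mul (13:ℝ)
      exact h'.mono_left nhdsWithin_le_nhds
    exact squeeze_zero_norm' hev hg
  have hexp := (Complex.continuous_exp.tendsto' 0 1 Complex.exp_zero).comp h0
  exact hexp
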